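/- The substitution ρ is primitive if and only if its substitution operator M is strongly positive: for every non-zero f in the positive cone K of C(A, ℝ) there exists p ∈ ℕ with (M^p f)(a) > 0 for all a ∈ A. -/
import Mathlib


open Filter Topology

/-- The left shift on bi-infinite sequences. -/
def shift {A : Type*} (w : ℤ → A) : ℤ → A := fun i => w (i + 1)

/-- The finite subword of `w` of length `n` starting at position `j`. -/
def word {A : Type*} (w : ℤ → A) (j : ℤ) (n : ℕ) : List A :=
  (List.range n).map fun i => w (j + (i : ℤ))

/-- The subshift determined by a language `L ⊆ A*`. -/
def subshiftOf {A : Type*} (L : Set (List A)) : Set (ℤ → A) :=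
  {w | ∀ (j : ℤ) (n : ℕ), word w j n ∈ L}

/-- The set of finite subwords of a bi-infinite sequence. -/
def subwordsOf {A : Type*} (w : ℤ → A) : Set (List A) :=
  {u | ∃ (j : ℤ) (n : ℕ), u = word w j n}

/-- The language of a bi-infinite sequence: the closure of its set of finite subwords. -/
def langOfSeq {A : Type*} [TopologicalSpace A] (w : ℤ → A) : Set (List A) :=
  closure (subwordsOf w)

/-- The shift orbit of a bi-infinite sequence. -/
def orbit {A : Type*} (w : ℤ → A) : Set (ℤ → A) :=
  {x | ∃ k : ℤ, x = fun i => w (i + k)}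

/-- Application of a substitution to a finite word, by concatenation. -/
def substWord {A : Type*} (ρ : A → List A) (u : List A) : List A := u.flatMap ρ

/-- The `n`-th iterated substitute (level-`n` supertile) of a letter. -/
def substIter {A : Type*} (ρ : A → List A) (n : ℕ) (a : A) : List A :=
  (substWord ρ)^[n] [a]

/-- The language of a substitution: closure of the set of words generated by `ρ`. -/
def lang {A : Type*} [TopologicalSpace A] (ρ : A → List A) : Set (List A) :=
  closure {u : List A | ∃ (a : A) (k : ℕ), u <:+: substIter ρ k a}

/-- The legal `n`-letter words of a substitution. -/
def langN {A : Type*} [TopologicalSpace A] (ρ : A → List A) (n : ℕ) : Set (List A) :=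
  closure {u : List A | u.length = n ∧ ∃ (a : A) (k : ℕ), u <:+: substIter ρ k a}

/-- Primitivity of a substitution on a topological alphabet. -/
def Primitive {A : Type*} [TopologicalSpace A] (ρ : A → List A) : Prop :=
  ∀ U : Set A, IsOpen U → U.Nonempty → ∃ p : ℕ, ∀ a : A, ∃ b ∈ substIter ρ p a, b ∈ U

/-- `y` is the image of the bi-infinite sequence `w` under the substitution `ρ`,
with the image of `w 0` starting at position `0`. -/
def IsSubstOf {A : Type*} (ρ : A → List A) (w y : ℤ → A) : Prop :=
  ∃ o : ℤ → ℤ, o 0 = 0 ∧ (∀ k : ℤ, o (k + 1) = o k + (ρ (w k)).length) ∧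
    ∀ (k : ℤ) (i : ℕ) (h : i < (ρ (w k)).length), y (o k + (i : ℤ)) = (ρ (w k)).get ⟨i, h⟩

/-- `ρ` is primitive iff its substitution operator `M` is strongly positive: for every
non-zero `f ≥ 0` in `C(A, ℝ)` there is `p` with `(M^p f)(a) = Σ_{b ◁ ρ^p(a)} f(b) > 0` for
all `a ∈ A`. -/
theorem stmt16 {A : Type*} [TopologicalSpace A] [CompactSpace A] [T2Space A]
    (ρ : A → List A) (hρ : Continuous ρ) (h1 : ∀ a : A, 1 ≤ (ρ a).length) :
    Primitive ρ ↔ ∀ f : C(A, ℝ), (∀ a : A, 0 ≤ f a) → f ≠ 0 →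
      ∃ p : ℕ, ∀ a : A, 0 < ((substIter ρ p a).map (fun b => f b)).sum := by
  constructor
  · intro hprim f hf hne
    have : ∃ a, f a ≠ 0 := by
      by_contra h
      push_neg at h
      exact hne (ContinuousMap.ext fun a => h a)
    obtain ⟨a0, ha0⟩ := this
    have hU : IsOpen (f ⁻¹' Set.Ioi 0) := (isOpen_Ioi).preimage f.continuous
    have hUne : (f ⁻¹' Set.Ioi 0).Nonempty := ⟨a0, lt_of_le_of_ne (hf a0) (Ne.symm ha0)⟩
    obtain ⟨p, hp⟩ := hprim _ hU hUne
    refine ⟨p, fun a => ?_⟩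
    obtain ⟨b, hb, hbU⟩ := hp a
    have hmem : f b ∈ (substIter ρ p a).map (fun b => f b) :=
      List.mem_map.mpr ⟨b, hb, rfl⟩
    have hle : f b ≤ ((substIter ρ p a).map (fun b => f b)).sum :=
      List.single_le_sum (fun x hx => by
        obtain ⟨c, _, rfl⟩ := List.mem_map.mp hx; exact hf c) _ hmem
    exact lt_of_lt_of_le hbU hle
  · intro h U hUopen ⟨a0, ha0⟩
    obtain ⟨g, hg0, hg1, hgbd⟩ := exists_continuous_zero_one_of_isClosed
      (isClosed_singleton (x := a0)) hUopen.isClosed_compl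
      (Set.disjoint_singleton_left.mpr (by simpa using ha0))
    set f : C(A, ℝ) := (1 : C(A, ℝ)) - g with hfdef
    have hfnn : ∀ a, 0 ≤ f a := fun a => by
      have := (hgbd a).2
      simp [hfdef]; linarith
    have hfa0 : f a0 = 1 := by
      have := hg0 (Set.mem_singleton a0)
      simp [hfdef]
      simpa using this
    have hfne : f ≠ 0 := by
      intro hcontra
      rw [hcontra] at hfa0
      simp at hfa0
    obtain ⟨p, hp⟩ := h f hfnn hfne
    refine ⟨p, fun a => ?_⟩
    by_contra hc
    push_neg at hc
    have hzero : ((substIter ρ p a).map (fun b => f b)).sum = 0 := by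
      apply List.sum_eq_zero
      intro x hx
      obtain ⟨c, hc', rfl⟩ := List.mem_map.mp hx
      have hcU : c ∉ U := fun hmem => hc c hc' hmem
      have h1' : g c = 1 := hg1 hcU
      simp [hfdef, h1']
    have := hp a
    rw [hzero] at this
    exact lt_irrefl 0 this
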